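/- Let p be a complex polynomial of degree at most n, z ∈ ℂ with |z| ≤ 1, and U the (n+1)×(n+1) unitary matrix defined from z as above. Then p(z) equals the (1,1) entry of the matrix p(U) (p evaluated at U via its matrix powers). -/

import Mathlib

open Matrix

noncomputable def sneakyU (n : ℕ) (z : ℂ) : Matrix (Fin (n + 1)) (Fin (n + 1)) ℂ :=
  fun i j =>
    if i = 0 ∧ j = 0 then z
    else if i = 1 ∧ j = 0 then (Real.sqrt (1 - ‖z‖ ^ 2) : ℂ)
    else if i = 0 ∧ j = Fin.last n then (Real.sqrt (1 - ‖z‖ ^ 2) : ℂ)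
    else if i = 1 ∧ j = Fin.last n then -(starRingEnd ℂ z)
    else if 2 ≤ (i : ℕ) ∧ (j : ℕ) + 1 = (i : ℕ) then 1
    else 0

lemma sneakyU_key (n : ℕ) (hn : 1 ≤ n) (z : ℂ) :
    ∀ k : ℕ, k ≤ n → ∀ i : Fin (n + 1),
      (sneakyU n z ^ k) i 0 =
        if i = 0 then z ^ k
        else if (i : ℕ) ≤ k then (Real.sqrt (1 - ‖z‖ ^ 2) : ℂ) * z ^ (k - (i : ℕ))
        else 0 := by
  intro k
  induction k with
  | zero =>
    intro _ i
    simp only [pow_zero, Matrix.one_apply]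
    by_cases h : i = 0
    · simp [h]
    · have : ¬ (i : ℕ) ≤ 0 := by
        intro h0
        exact h (Fin.ext (Nat.le_zero.mp h0))
      simp [h, this]
  | succ k ih =>
    intro hk i
    have hk' : k ≤ n := Nat.le_of_succ_le hk
    have hkn : k < n := hk
    rw [pow_succ', Matrix.mul_apply]
    have hlastne : (Fin.last n : Fin (n+1)) ≠ 0 := by
      intro h
      have := congrArg Fin.val h
      simp [Fin.last] at this
      omega
    have hflast : (sneakyU n z ^ k) (Fin.last n) 0 = 0 := by
      rw [ih hk' (Fin.last n)]
      have : ¬ ((Fin.last n : Fin (n+1)) : ℕ) ≤ k := by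
        simp [Fin.last]; omega
      rw [if_neg hlastne, if_neg this]
    have h1ne0 : (1 : Fin (n+1)) ≠ 0 := by
      intro h
      have := congrArg Fin.val h
      simp [Fin.val_one'] at this
      omega
    have hone : ((1 : Fin (n+1)) : ℕ) = 1 := by
      simp [Fin.val_one']; omega
    by_cases hi0 : i = 0
    · subst hi0
      rw [Finset.sum_eq_single (0 : Fin (n+1))]
      · rw [ih hk' 0]
        simp [sneakyU, pow_succ]
        ring
      · intro j _ hj
        by_cases hjl : j = Fin.last n
        · subst hjl; rw [hflast]; ring
        · have : sneakyU n z 0 j = 0 := by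
            simp [sneakyU, hj, hjl, h1ne0.symm]
          rw [this]; ring
      · intro h; exact absurd (Finset.mem_univ _) h
    · by_cases hi1 : i = 1
      · subst hi1
        rw [Finset.sum_eq_single (0 : Fin (n+1))]
        · rw [ih hk' 0, if_pos rfl, if_neg h1ne0, hone,
            if_pos (by omega : (1:ℕ) ≤ k + 1)]
          have hU : sneakyU n z 1 0 = (Real.sqrt (1 - ‖z‖ ^ 2) : ℂ) := by
            simp [sneakyU, h1ne0]
          rw [hU]
          simp
        · intro j _ hj
          by_cases hjl : j = Fin.last n
          · subst hjl; rw [hflast]; ring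
          · have : sneakyU n z 1 j = 0 := by
              have hm : 1 % (n + 1) = 1 := Nat.mod_eq_of_lt (by omega)
              simp only [sneakyU, hj, hjl, h1ne0, and_false, false_and, if_false,
                Fin.val_one', hm]
              rw [if_neg (by omega : ¬ (2 ≤ 1 ∧ (j : ℕ) + 1 = 1))]
            rw [this]; ring
        · intro h; exact absurd (Finset.mem_univ _) h
      · -- i ≥ 2
        have hiv : 2 ≤ (i : ℕ) := by
          by_contra h
          push_neg at h
          have h01 : (i : ℕ) = 0 ∨ (i : ℕ) = 1 := by omega
          rcases h01 with h' | h'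
          · exact hi0 (Fin.ext (by simp [h']))
          · exact hi1 (Fin.ext (by rw [h', hone]))
        set j₀ : Fin (n+1) := ⟨(i : ℕ) - 1, by omega⟩ with hj₀
        rw [Finset.sum_eq_single j₀]
        · have hUij : sneakyU n z i j₀ = 1 := by
            have hne0 : ¬ i = 0 := hi0
            have hne1 : ¬ i = 1 := hi1
            have : (j₀ : ℕ) + 1 = (i : ℕ) := by
              show (i : ℕ) - 1 + 1 = (i : ℕ); omega
            simp [sneakyU, hne0, hne1, hiv, this]
          rw [hUij, ih hk' j₀, one_mul]
          have hj₀ne0 : j₀ ≠ 0 := by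
            intro h
            have h' : (i : ℕ) - 1 = 0 := congrArg Fin.val h
            omega
          rw [if_neg hj₀ne0, if_neg hi0]
          have hj₀v : (j₀ : ℕ) = (i : ℕ) - 1 := rfl
          by_cases hle : (i : ℕ) ≤ k + 1
          · rw [if_pos (by rw [hj₀v]; omega : (j₀ : ℕ) ≤ k), if_pos hle]
            have he : k - (j₀ : ℕ) = k + 1 - (i : ℕ) := by rw [hj₀v]; omega
            rw [he]
          · rw [if_neg (by rw [hj₀v]; omega : ¬ (j₀ : ℕ) ≤ k), if_neg hle]
        · intro j _ hj
          have : sneakyU n z i j = 0 := by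
            have h1 : ¬ (i = 0 ∧ j = 0) := by rintro ⟨h, _⟩; exact hi0 h
            have h2 : ¬ (i = 1 ∧ j = 0) := by rintro ⟨h, _⟩; exact hi1 h
            have h3 : ¬ (i = 0 ∧ j = Fin.last n) := by rintro ⟨h, _⟩; exact hi0 h
            have h4 : ¬ (i = 1 ∧ j = Fin.last n) := by rintro ⟨h, _⟩; exact hi1 h
            have h5 : ¬ (2 ≤ (i : ℕ) ∧ (j : ℕ) + 1 = (i : ℕ)) := by
              rintro ⟨_, h⟩
              exact hj (Fin.ext (show (j : ℕ) = (i : ℕ) - 1 by omega))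
            simp [sneakyU, h1, h2, h3, h4, h5]
          rw [this]; ring
        · intro h; exact absurd (Finset.mem_univ _) h

theorem sneakyU_poly_entry (n : ℕ) (hn : 1 ≤ n) (z : ℂ) (hz : ‖z‖ ≤ 1)
    (p : Polynomial ℂ) (hp : p.natDegree ≤ n) :
    (Polynomial.aeval (sneakyU n z) p) 0 0 = p.eval z := by
  have hd : p.natDegree < n + 1 := Nat.lt_succ_of_le hp
  rw [Polynomial.aeval_eq_sum_range' hd, Polynomial.eval_eq_sum_range' hd]
  rw [Matrix.sum_apply]
  apply Finset.sum_congr rfl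
  intro k hk
  have hkn : k ≤ n := by
    have := Finset.mem_range.mp hk; omega
  rw [Matrix.smul_apply, sneakyU_key n hn z k hkn 0, if_pos rfl]
  simp [smul_eq_mul]
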